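/- (Geodesic weak-quasi-convexity) Let C be a real n×n matrix with singular value decomposition C = UΣVᵀ (U, V orthogonal, Σ diagonal with nonnegative entries) and X_* := VUᵀ. Let X ∈ O(n) and let Ω be a skew-symmetric matrix with ‖Ω‖₂ < π and X·exp(Ω) = X_*. Then Tr(Ωᵀ · skew(Xᵀ Cᵀ)) ≥ (1/2)·(1 + cos(‖Ω‖₂))·(Tr(C X_*) − Tr(C X)). -/

import Mathlib

open Matrix

noncomputable section

/-- Matrix exponential of a real square matrix. -/
def mexp {n : ℕ} (A : Matrix (Fin n) (Fin n) ℝ) : Matrix (Fin n) (Fin n) ℝ :=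
  NormedSpace.exp A

/-- Skew-symmetric part: `skew M = (M - Mᵀ)/2`. -/
def skewPart {n : ℕ} (M : Matrix (Fin n) (Fin n) ℝ) : Matrix (Fin n) (Fin n) ℝ :=
  (1 / 2 : ℝ) • (M - Mᵀ)

/-- Frobenius norm of a real square matrix. -/
def frobNorm {n : ℕ} (A : Matrix (Fin n) (Fin n) ℝ) : ℝ :=
  Real.sqrt (∑ i, ∑ j, (A i j) ^ 2)

/-- The singular values of `A`: square roots of the eigenvalues of `AᴴA = AᵀA`. -/
def singVals {n : ℕ} (A : Matrix (Fin n) (Fin n) ℝ) : Fin n → ℝ :=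
  fun i => Real.sqrt ((show (Aᵀ * A).IsHermitian from Matrix.isHermitian_conjTranspose_mul_self A).eigenvalues i)

/-- Largest singular value of `A`. -/
def sigmaMax {n : ℕ} (A : Matrix (Fin n) (Fin n) ℝ) : ℝ := ⨆ i, singVals A i

/-- Smallest singular value of `A`. -/
def sigmaMin {n : ℕ} (A : Matrix (Fin n) (Fin n) ℝ) : ℝ := ⨅ i, singVals A i

/-- Spectral norm (largest singular value) of `A`. -/
def specNorm {n : ℕ} (A : Matrix (Fin n) (Fin n) ℝ) : ℝ := sigmaMax A

/-- Riemannian distance on a connected component of `O(n)`: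
`dist(X,Y) = min { ‖Ω‖_F : Ω skew-symmetric, X·exp(Ω) = Y }`. -/
def Odist {n : ℕ} (X Y : Matrix (Fin n) (Fin n) ℝ) : ℝ :=
  sInf {d : ℝ | ∃ Ω : Matrix (Fin n) (Fin n) ℝ, Ωᵀ = -Ω ∧ X * mexp Ω = Y ∧ d = frobNorm Ω}

end

namespace PWQC
open ComplexOrder

variable {n : ℕ}
def cmap {n : ℕ} (A : Matrix (Fin n) (Fin n) ℝ) : Matrix (Fin n) (Fin n) ℂ :=
  A.map Complex.ofRealHom

lemma cmap_mul (A B : Matrix (Fin n) (Fin n) ℝ) : cmap (A * B) = cmap A * cmap B :=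
  Matrix.map_mul
lemma cmap_one : cmap (1 : Matrix (Fin n) (Fin n) ℝ) = 1 :=
  Matrix.map_one _ (map_zero _) (map_one _)
lemma cmap_neg (A : Matrix (Fin n) (Fin n) ℝ) : cmap (-A) = -cmap A := by
  ext i j; simp [cmap]
lemma cmap_conjTranspose (A : Matrix (Fin n) (Fin n) ℝ) : (cmap A)ᴴ = cmap Aᵀ := by
  ext i j; simp [cmap, conjTranspose_apply]
lemma rconjTranspose (A : Matrix (Fin n) (Fin n) ℝ) : Aᴴ = Aᵀ := by
  ext i j; simp [conjTranspose_apply]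
lemma cmap_diagonal (d : Fin n → ℝ) :
    cmap (diagonal d) = diagonal (fun i => (d i : ℂ)) := by
  rw [cmap, Matrix.diagonal_map (map_zero _)]; rfl

lemma det_smul_one_sub_conj {P N : Matrix (Fin n) (Fin n) ℂ}
    (hP : P * Pᴴ = 1) (z : ℂ) :
    (z • (1 : Matrix (Fin n) (Fin n) ℂ) - P * N * Pᴴ).det
      = (z • (1 : Matrix (Fin n) (Fin n) ℂ) - N).det := by
  have key : z • (1 : Matrix (Fin n) (Fin n) ℂ) - P * N * Pᴴ
      = P * (z • (1 : Matrix (Fin n) (Fin n) ℂ) - N) * Pᴴ := by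
    rw [mul_sub, sub_mul, Matrix.mul_smul, mul_one, Matrix.smul_mul, hP]
  rw [key, det_mul, det_mul]
  have h : P.det * Pᴴ.det = 1 := by rw [← det_mul, hP, det_one]
  calc P.det * (z • (1 : Matrix (Fin n) (Fin n) ℂ) - N).det * Pᴴ.det
      = (z • (1 : Matrix (Fin n) (Fin n) ℂ) - N).det * (P.det * Pᴴ.det) := by ring
    _ = _ := by rw [h, mul_one]

lemma det_smul_one_sub_diagonal (z : ℂ) (d : Fin n → ℂ) :
    (z • (1 : Matrix (Fin n) (Fin n) ℂ) - diagonal d).det = ∏ j, (z - d j) := by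
  rw [smul_one_eq_diagonal, diagonal_sub, det_diagonal]

lemma cmap_mexp (A : Matrix (Fin n) (Fin n) ℝ) :
    cmap (mexp A) = NormedSpace.exp (cmap A) := by
  letI : SeminormedRing (Matrix (Fin n) (Fin n) ℝ) := Matrix.linftyOpSemiNormedRing
  letI : NormedRing (Matrix (Fin n) (Fin n) ℝ) := Matrix.linftyOpNormedRing
  letI : NormedAlgebra ℝ (Matrix (Fin n) (Fin n) ℝ) := Matrix.linftyOpNormedAlgebra
  letI : SeminormedRing (Matrix (Fin n) (Fin n) ℂ) := Matrix.linftyOpSemiNormedRing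
  letI : NormedRing (Matrix (Fin n) (Fin n) ℂ) := Matrix.linftyOpNormedRing
  letI : NormedAlgebra ℝ (Matrix (Fin n) (Fin n) ℂ) := Matrix.linftyOpNormedAlgebra
  letI : NormedAlgebra ℂ (Matrix (Fin n) (Fin n) ℂ) := Matrix.linftyOpNormedAlgebra
  letI : NormedAlgebra ℚ (Matrix (Fin n) (Fin n) ℝ) := Matrix.linftyOpNormedAlgebra
  letI : NormedAlgebra ℚ (Matrix (Fin n) (Fin n) ℂ) := Matrix.linftyOpNormedAlgebra
  have hcont : Continuous
      ((Complex.ofRealHom.mapMatrix : Matrix (Fin n) (Fin n) ℝ →+* Matrix (Fin n) (Fin n) ℂ)) :=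
    continuous_id.matrix_map Complex.continuous_ofReal
  have h := NormedSpace.map_exp
    (Complex.ofRealHom.mapMatrix : Matrix (Fin n) (Fin n) ℝ →+* Matrix (Fin n) (Fin n) ℂ)
    hcont A
  rw [mexp, cmap]
  calc (NormedSpace.exp A).map Complex.ofRealHom
      = Complex.ofRealHom.mapMatrix (NormedSpace.exp A) := rfl
    _ = NormedSpace.exp (Complex.ofRealHom.mapMatrix A) := h
    _ = NormedSpace.exp (A.map Complex.ofRealHom) := rfl

lemma sq_smul_one_sub_mul (z : ℂ) (M : Matrix (Fin n) (Fin n) ℂ) :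
    z ^ 2 • (1 : Matrix (Fin n) (Fin n) ℂ) - M * M
      = (z • (1 : Matrix (Fin n) (Fin n) ℂ) - M) * (z • (1 : Matrix (Fin n) (Fin n) ℂ) + M) := by
  have e1 : (z • (1 : Matrix (Fin n) (Fin n) ℂ)) * M = z • M := by
    rw [Matrix.smul_mul, one_mul]
  have e2 : M * (z • (1 : Matrix (Fin n) (Fin n) ℂ)) = z • M := by
    rw [Matrix.mul_smul, mul_one]
  have e3 : (z • (1 : Matrix (Fin n) (Fin n) ℂ)) * (z • (1 : Matrix (Fin n) (Fin n) ℂ))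
      = z ^ 2 • (1 : Matrix (Fin n) (Fin n) ℂ) := by
    rw [Matrix.smul_mul, Matrix.mul_smul, smul_smul, ← pow_two, one_mul]
  rw [sub_mul, mul_add, mul_add, e1, e2, e3]
  abel

lemma key (Ω : Matrix (Fin n) (Fin n) ℝ) (hskew : Ωᵀ = -Ω) :
    ∃ (P : Matrix (Fin n) (Fin n) ℂ) (lam : Fin n → ℝ),
      P * Pᴴ = 1 ∧ Pᴴ * P = 1 ∧
      (∀ k, |lam k| ≤ specNorm Ω) ∧
      cmap Ω = P * diagonal (fun k => -(Complex.I * lam k)) * Pᴴ ∧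
      cmap (mexp (-Ω)) = P * diagonal (fun k => Complex.exp (Complex.I * lam k)) * Pᴴ := by
  have hH : (Complex.I • cmap Ω).IsHermitian := by
    unfold Matrix.IsHermitian
    rw [conjTranspose_smul, cmap_conjTranspose, hskew, cmap_neg]
    simp [Complex.conj_I]
  set H : Matrix (Fin n) (Fin n) ℂ := Complex.I • cmap Ω with hH_def
  set P : Matrix (Fin n) (Fin n) ℂ := (hH.eigenvectorUnitary : Matrix (Fin n) (Fin n) ℂ)
    with hP_def
  set lam : Fin n → ℝ := hH.eigenvalues with hlam_def
  have hP1 : P * Pᴴ = 1 := by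
    rw [← Matrix.star_eq_conjTranspose]
    exact (Unitary.mem_iff.mp (hH.eigenvectorUnitary).2).2
  have hP2 : Pᴴ * P = 1 := by
    rw [← Matrix.star_eq_conjTranspose]
    exact (Unitary.mem_iff.mp (hH.eigenvectorUnitary).2).1
  have hspec : H = P * diagonal (fun k => (lam k : ℂ)) * Pᴴ := by
    have h := hH.spectral_theorem
    rw [← Matrix.star_eq_conjTranspose]
    rw [h]; exact Unitary.conjStarAlgAut_apply _ _
  have hd1 : (-Complex.I) • diagonal (fun k => ((lam k : ℝ) : ℂ))
      = diagonal (fun k => -(Complex.I * (lam k : ℂ))) := by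
    ext i j; by_cases h : i = j <;> simp [Matrix.diagonal_apply, h]
  have hd2 : Complex.I • diagonal (fun k => ((lam k : ℝ) : ℂ))
      = diagonal (fun k => Complex.I * (lam k : ℂ)) := by
    ext i j; by_cases h : i = j <;> simp [Matrix.diagonal_apply, h]
  have hOmC : cmap Ω = P * diagonal (fun k => -(Complex.I * lam k)) * Pᴴ := by
    have h1 : cmap Ω = (-Complex.I) • H := by
      rw [hH_def, smul_smul]
      simp [Complex.I_mul_I]
    rw [h1, hspec, ← Matrix.smul_mul, ← Matrix.mul_smul, hd1]
  have hnegOm : cmap (-Ω) = P * diagonal (fun k => Complex.I * lam k) * Pᴴ := by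
    have h1 : cmap (-Ω) = Complex.I • H := by
      rw [cmap_neg, hH_def, smul_smul, Complex.I_mul_I, neg_one_smul]
    rw [h1, hspec, ← Matrix.smul_mul, ← Matrix.mul_smul, hd2]
  have hPunit : IsUnit P := ⟨⟨P, Pᴴ, hP1, hP2⟩, rfl⟩
  have hPinv : P⁻¹ = Pᴴ := Matrix.inv_eq_left_inv hP2
  have hexp : cmap (mexp (-Ω))
      = P * diagonal (fun k => Complex.exp (Complex.I * lam k)) * Pᴴ := by
    have hdexp : (NormedSpace.exp fun k => Complex.I * (lam k : ℂ))
        = fun k => Complex.exp (Complex.I * (lam k : ℂ)) := by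
      funext k
      rw [Pi.coe_exp]
      exact (congrFun Complex.exp_eq_exp_ℂ _).symm
    rw [cmap_mexp, hnegOm, ← hPinv, Matrix.exp_conj P _ hPunit, Matrix.exp_diagonal, hdexp,
      hPinv]
  refine ⟨P, lam, hP1, hP2, ?_, hOmC, hexp⟩
  intro k
  have hdet1 : (((lam k : ℂ)) • (1 : Matrix (Fin n) (Fin n) ℂ) - H).det = 0 := by
    rw [hspec, det_smul_one_sub_conj hP1, det_smul_one_sub_diagonal]
    exact Finset.prod_eq_zero (Finset.mem_univ k) (by simp)
  have hdet2 : (((lam k : ℂ)) ^ 2 • (1 : Matrix (Fin n) (Fin n) ℂ) - H * H).det = 0 := by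
    rw [sq_smul_one_sub_mul, det_mul, hdet1, zero_mul]
  have hHH : H * H = cmap (Ωᴴ * Ω) := by
    rw [rconjTranspose, hskew, neg_mul, cmap_neg, hH_def, Matrix.smul_mul, Matrix.mul_smul,
      smul_smul, Complex.I_mul_I, neg_one_smul, ← cmap_mul]
  have hG := Matrix.isHermitian_conjTranspose_mul_self Ω
  set Q : Matrix (Fin n) (Fin n) ℝ := (hG.eigenvectorUnitary : Matrix (Fin n) (Fin n) ℝ)
    with hQ_def
  have hstarQ : cmap (star Q) = (cmap Q)ᴴ := by
    ext i j; simp [cmap, conjTranspose_apply, Matrix.star_apply]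
  have hcQ : cmap Q * (cmap Q)ᴴ = 1 := by
    have h := (Unitary.mem_iff.mp (hG.eigenvectorUnitary).2).2
    rw [← hstarQ, ← cmap_mul]
    rw [show Q * star Q = 1 from h, cmap_one]
  have hGspec : cmap (Ωᴴ * Ω)
      = cmap Q * diagonal (fun j => (hG.eigenvalues j : ℂ)) * (cmap Q)ᴴ := by
    have h := hG.spectral_theorem
    conv_lhs => rw [h, Unitary.conjStarAlgAut_apply]
    rw [cmap_mul, cmap_mul, RCLike.ofReal_real_eq_id, Function.id_comp, cmap_diagonal, hstarQ]
  have hprod : (∏ j, (((lam k : ℂ)) ^ 2 - (hG.eigenvalues j : ℂ))) = 0 := by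
    rw [← det_smul_one_sub_diagonal, ← det_smul_one_sub_conj hcQ, ← hGspec, ← hHH]
    exact hdet2
  obtain ⟨j, _, hj⟩ := Finset.prod_eq_zero_iff.mp hprod
  have hj' : (lam k) ^ 2 = hG.eigenvalues j := by
    have h2 := sub_eq_zero.mp hj
    exact_mod_cast h2
  have habs : |lam k| = singVals Ω j := by
    rw [singVals]; change |lam k| = Real.sqrt (hG.eigenvalues j); rw [← hj', Real.sqrt_sq_eq_abs]
  rw [habs]
  exact le_ciSup (Set.Finite.bddAbove (Set.finite_range _)) j

lemma cmap_add (A B : Matrix (Fin n) (Fin n) ℝ) : cmap (A + B) = cmap A + cmap B := by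
  ext i j; simp [cmap]

lemma cmap_sub (A B : Matrix (Fin n) (Fin n) ℝ) : cmap (A - B) = cmap A - cmap B := by
  ext i j; simp [cmap]

lemma cmap_smul (c : ℝ) (A : Matrix (Fin n) (Fin n) ℝ) :
    cmap (c • A) = (c : ℂ) • cmap A := by
  ext i j; simp [cmap]

lemma cmap_trace (A : Matrix (Fin n) (Fin n) ℝ) : (cmap A).trace = (A.trace : ℂ) := by
  simp [cmap, Matrix.trace, Matrix.diag]

lemma scalar_ineq (x θ : ℝ) (hx : |x| ≤ θ) (hθ : θ < Real.pi) :
    0 ≤ x * Real.sin x + (1/2) * (1 + Real.cos θ) * (Real.cos x - 1) := by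
  have hy0 : 0 ≤ |x| := abs_nonneg x
  have hyπ : |x| ≤ Real.pi := le_of_lt (lt_of_le_of_lt hx hθ)
  have hxy : x * Real.sin x = |x| * Real.sin |x| := by
    rcases abs_cases x with ⟨h1, _⟩ | ⟨h1, _⟩ <;> rw [h1] <;> simp [Real.sin_neg]
  have hcx : Real.cos x = Real.cos |x| := (Real.cos_abs x).symm
  rw [hxy, hcx]
  set y := |x|
  have h1 : Real.cos θ ≤ Real.cos y := Real.cos_le_cos_of_nonneg_of_le_pi hy0 hθ.le hx
  have h2 : Real.sin y ≤ y := Real.sin_le hy0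
  have h3 : 0 ≤ Real.sin y := Real.sin_nonneg_of_nonneg_of_le_pi hy0 hyπ
  have h4 := Real.sin_sq_add_cos_sq y
  have h5 : Real.cos y ≤ 1 := Real.cos_le_one y
  nlinarith [mul_nonneg h3 (sub_nonneg.2 h2),
    mul_nonneg (sub_nonneg.2 h5) (sub_nonneg.2 h1), mul_nonneg hy0 h3]

lemma mexp_mul_mexp_neg (A : Matrix (Fin n) (Fin n) ℝ) :
    mexp A * mexp (-A) = 1 := by
  rw [mexp, mexp, ← Matrix.exp_add_of_commute A (-A) (Commute.neg_right (Commute.refl A)),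
    add_neg_cancel, NormedSpace.exp_zero]

lemma psd_diag (B : Matrix (Fin n) (Fin n) ℂ) (hB : B.PosSemidef) (k : Fin n) :
    0 ≤ (B k k).re ∧ (B k k).im = 0 := by
  have h := hB.dotProduct_mulVec_nonneg (Pi.single k 1)
  have hv : star (Pi.single k (1:ℂ)) ⬝ᵥ (B *ᵥ Pi.single k 1) = B k k := by
    simp [dotProduct, Matrix.mulVec, Pi.single_apply, Finset.sum_ite_eq, dotProduct]
  rw [hv] at h
  exact ⟨(Complex.le_def.mp h).1, ((Complex.le_def.mp h).2).symm⟩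

lemma trace_conj_diag_nonneg (A P : Matrix (Fin n) (Fin n) ℂ) (g : Fin n → ℂ)
    (hA : A.PosSemidef) (hP : P * Pᴴ = 1) (hP' : Pᴴ * P = 1)
    (hg : ∀ k, 0 ≤ (g k).re) :
    0 ≤ ((A * (P * diagonal g * Pᴴ)).trace).re := by
  have h1 : (A * (P * diagonal g * Pᴴ)).trace = ((Pᴴ * A * P) * diagonal g).trace := by
    simp only [← mul_assoc]
    rw [trace_mul_comm]
    simp only [← mul_assoc]
  have hB : (Pᴴ * A * P).PosSemidef := hA.conjTranspose_mul_mul_same P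
  rw [h1]
  have h2 : ((Pᴴ * A * P) * diagonal g).trace = ∑ k, (Pᴴ * A * P) k k * g k := by
    simp [Matrix.trace, Matrix.diag, Matrix.mul_diagonal]
  rw [h2, Complex.re_sum]
  apply Finset.sum_nonneg
  intro k _
  obtain ⟨hre, him⟩ := psd_diag _ hB k
  rw [Complex.mul_re, him]
  simpa using mul_nonneg hre (hg k)


lemma smul_diagonalC (z : ℂ) (d : Fin n → ℂ) :
    z • diagonal d = diagonal (fun k => z * d k) := by
  ext i j; by_cases h : i = j <;> simp [Matrix.diagonal_apply, h]

lemma conj_comb (P D₁ D₂ : Matrix (Fin n) (Fin n) ℂ) (hP1 : P * Pᴴ = 1) (hP2 : Pᴴ * P = 1)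
    (c : ℂ) :
    (P * D₁ * Pᴴ) * (P * D₂ * Pᴴ) + c • (P * D₁ * Pᴴ) - c • (1 : Matrix (Fin n) (Fin n) ℂ)
      = P * (D₁ * D₂ + c • D₁ - c • 1) * Pᴴ := by
  have h1 : (P * D₁ * Pᴴ) * (P * D₂ * Pᴴ) = P * (D₁ * D₂) * Pᴴ := by
    rw [show (P * D₁ * Pᴴ) * (P * D₂ * Pᴴ) = P * D₁ * (Pᴴ * P) * (D₂ * Pᴴ) by
      simp only [mul_assoc], hP2, mul_one]
    simp only [mul_assoc]
  have h2 : P * (D₁ * D₂ + c • D₁ - c • 1) * Pᴴ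
      = P * (D₁ * D₂) * Pᴴ + c • (P * D₁ * Pᴴ) - c • (1 : Matrix (Fin n) (Fin n) ℂ) := by
    rw [mul_sub, mul_add, sub_mul, add_mul, Matrix.mul_smul, Matrix.mul_smul, mul_one,
      Matrix.smul_mul, Matrix.smul_mul, hP1]
  rw [h1, h2]

end PWQC

open PWQC ComplexOrder

/-- geodesic weak-quasi-convexity of the Procrustes objective. -/
theorem procrustes_weak_quasi_convexity {n : ℕ}
    (C U S V : Matrix (Fin n) (Fin n) ℝ)
    (hU : Uᵀ * U = 1) (hV : Vᵀ * V = 1)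
    (hSdiag : S.IsDiag) (hSnn : ∀ i, 0 ≤ S i i)
    (hSVD : C = U * S * Vᵀ)
    (Xstar : Matrix (Fin n) (Fin n) ℝ) (hXstar : Xstar = V * Uᵀ)
    (X Ω : Matrix (Fin n) (Fin n) ℝ)
    (hX : Xᵀ * X = 1)
    (hskew : Ωᵀ = -Ω) (hΩ : specNorm Ω < Real.pi)
    (hlog : X * mexp Ω = Xstar) :
    (Ωᵀ * skewPart (Xᵀ * Cᵀ)).trace ≥
      (1 / 2) * (1 + Real.cos (specNorm Ω)) * ((C * Xstar).trace - (C * X).trace) := by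
  classical
  set θ := specNorm Ω with hθdef
  set c := (1/2) * (1 + Real.cos θ) with hcdef
  have hXeq : X = Xstar * mexp (-Ω) := by
    rw [← hlog, mul_assoc, mexp_mul_mexp_neg, mul_one]
  set E := mexp (-Ω) with hE
  set A := U * S * Uᵀ with hA
  have hCX : C * X = A * E := by
    rw [hXeq, hSVD, hXstar,
      show U * S * Vᵀ * (V * Uᵀ * E) = U * S * (Vᵀ * V) * (Uᵀ * E) by simp only [mul_assoc],
      hV, mul_one, hA]
    simp only [mul_assoc]
  have hCXstar : C * Xstar = A := by
    rw [hSVD, hXstar,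
      show U * S * Vᵀ * (V * Uᵀ) = U * S * (Vᵀ * V) * Uᵀ by simp only [mul_assoc],
      hV, mul_one, hA]
  set N := C * X with hN
  have hsk : skewPart (Xᵀ * Cᵀ) = (1/2 : ℝ) • (Nᵀ - N) := by
    rw [skewPart, show Xᵀ * Cᵀ = (C * X)ᵀ from (transpose_mul C X).symm, transpose_transpose,
      hN]
  have h1 : (Ω * Nᵀ).trace = -((N * Ω).trace) := by
    rw [← trace_transpose (Ω * Nᵀ), transpose_mul, transpose_transpose, hskew, Matrix.mul_neg,
      trace_neg]
  have hLHS : (Ωᵀ * skewPart (Xᵀ * Cᵀ)).trace = (N * Ω).trace := by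
    rw [hsk, hskew, Matrix.mul_smul, trace_smul, mul_sub, Matrix.neg_mul, Matrix.neg_mul,
      trace_sub, trace_neg, trace_neg, h1, trace_mul_comm Ω N, smul_eq_mul]
    ring
  rw [ge_iff_le, hLHS, hCXstar, hCX]
  set M := E * Ω + c • E - c • (1 : Matrix (Fin n) (Fin n) ℝ) with hM
  have htr : (A * M).trace
      = (A * E * Ω).trace + c * (A * E).trace - c * A.trace := by
    rw [hM, mul_sub, mul_add, trace_sub, trace_add, Matrix.mul_smul, Matrix.mul_smul, mul_one,
      trace_smul, trace_smul, smul_eq_mul, smul_eq_mul, ← mul_assoc]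
  have h0 : 0 ≤ (A * M).trace := by
    have h1' : (A * M).trace = ((cmap A * cmap M).trace).re := by
      rw [← cmap_mul, cmap_trace, Complex.ofReal_re]
    rw [h1']
    obtain ⟨P, lam, hP1, hP2, hbound, hOmC, hexpC⟩ := key Ω hskew
    set g : Fin n → ℂ := fun k =>
      Complex.exp (Complex.I * lam k) * (-(Complex.I * lam k))
        + (c : ℂ) * Complex.exp (Complex.I * lam k) - (c : ℂ) with hgdef
    have hMC : cmap M = P * diagonal g * Pᴴ := by
      rw [hM, cmap_sub, cmap_add, cmap_mul, cmap_smul, cmap_smul, cmap_one, hexpC, hOmC,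
        conj_comb _ _ _ hP1 hP2, diagonal_mul_diagonal, smul_diagonalC, smul_one_eq_diagonal,
        diagonal_add, diagonal_sub]
    have hApos : (cmap A).PosSemidef := by
      have hscmap : cmap S = diagonal (fun i => (S i i : ℂ)) := by
        conv_lhs => rw [← hSdiag.diagonal_diag]
        rw [cmap_diagonal]
        rfl
      have hdpos : (diagonal (fun i => (S i i : ℂ))).PosSemidef :=
        Matrix.PosSemidef.diagonal (fun i => Complex.zero_le_real.mpr (hSnn i))
      have : cmap A = cmap U * diagonal (fun i => (S i i : ℂ)) * (cmap U)ᴴ := by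
        rw [hA, cmap_mul, cmap_mul, hscmap, cmap_conjTranspose]
      rw [this]
      exact hdpos.mul_mul_conjTranspose_same (cmap U)
    rw [hMC]
    apply trace_conj_diag_nonneg _ _ _ hApos hP1 hP2
    intro k
    have hek : Complex.exp (Complex.I * (lam k : ℂ))
        = (Real.cos (lam k) : ℂ) + (Real.sin (lam k) : ℂ) * Complex.I := by
      rw [mul_comm, Complex.exp_mul_I, Complex.ofReal_cos, Complex.ofReal_sin]
    have hgre : (g k).re = lam k * Real.sin (lam k) + c * (Real.cos (lam k) - 1) := by
      rw [hgdef]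
      simp only [hek, Complex.add_re, Complex.sub_re, Complex.mul_re, Complex.mul_im,
        Complex.add_im, Complex.neg_re, Complex.neg_im, Complex.I_re, Complex.I_im,
        Complex.ofReal_re, Complex.ofReal_im]
      ring
    rw [hgre, hcdef]
    exact scalar_ineq (lam k) θ (hbound k) hΩ
  linarith [htr]
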